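/- Let f and g be Lorenz maps such that their kneading sequences agree up to length n (K_n^±(f) = K_n^±(g)) and such that for all i ≤ n, f^i(0_±)=0 if and only if g^i(0_±)=0. Then there exists an orientation preserving homeomorphism h : [-1,1] → [-1,1] such that for every k ≤ n and every branch I of f^k, h(I) is a branch of g^k and the words agree: ω(I,f) = ω(h(I),g). -/

import Mathlib

open Set Filter

noncomputable section

/-- The full Lorenz map glued from the two branches (left branch on `x < 0`). -/
def lorenzGlue (fm fp : ℝ → ℝ) : ℝ → ℝ := fun x => if x < 0 then fm x else fp x

/-- `(fm, fp)` is a Lorenz map on `[-1,1]`: continuous strictly increasing branches,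
mapping into `[-1,1]`, fixing the endpoints `±1`. -/
def IsLorenzPair (fm fp : ℝ → ℝ) : Prop :=
  ContinuousOn fm (Icc (-1) 0) ∧ ContinuousOn fp (Icc 0 1) ∧
  StrictMonoOn fm (Icc (-1) 0) ∧ StrictMonoOn fp (Icc 0 1) ∧
  MapsTo fm (Icc (-1) 0) (Icc (-1) 1) ∧ MapsTo fp (Icc 0 1) (Icc (-1) 1) ∧
  fm (-1) = -1 ∧ fp 1 = 1

/-- No point of `S` is mapped to the critical point `0` by `f^[i]` for `i < n`;
this is the combinatorial meaning of "`f^n` is monotone on `S`". -/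
def noCut (f : ℝ → ℝ) (n : ℕ) (S : Set ℝ) : Prop :=
  ∀ x ∈ S, ∀ i < n, f^[i] x ≠ 0

/-- `[a,b]` is a branch of `f^n`: a maximal closed interval in `[-1,1]` on whose
interior `f^n` is monotone (no cut point of order `< n`). -/
def IsBranch (f : ℝ → ℝ) (n : ℕ) (a b : ℝ) : Prop :=
  -1 ≤ a ∧ a < b ∧ b ≤ 1 ∧ noCut f n (Ioo a b) ∧
  ∀ a' b' : ℝ, -1 ≤ a' → b' ≤ 1 → a' ≤ a → b ≤ b' → noCut f n (Ioo a' b') → a' = a ∧ b' = b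

/-- The word `w ∈ {L,R}^n` (here `false = L`, `true = R`) is the itinerary word
of the interval `(a,b)` for `f^n`. -/
def HasWord (f : ℝ → ℝ) (n : ℕ) (a b : ℝ) (w : ℕ → Bool) : Prop :=
  ∀ i < n, (w i = false → f^[i] '' Ioo a b ⊆ Ico (-1) 0) ∧
           (w i = true → f^[i] '' Ioo a b ⊆ Ioc 0 1)

/-- `critNeg fm fp n = f^n(0_-)`, the `n`-th left critical value. -/
def critNeg (fm fp : ℝ → ℝ) : ℕ → ℝ
  | 0 => 0
  | n + 1 => (lorenzGlue fm fp)^[n] (fm 0)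

/-- `critPos fm fp n = f^n(0_+)`, the `n`-th right critical value. -/
def critPos (fm fp : ℝ → ℝ) : ℕ → ℝ
  | 0 => 0
  | n + 1 => (lorenzGlue fm fp)^[n] (fp 0)

/-- `[a,b]` is a homterval of `f`: a maximal nondegenerate closed interval on whose
interior every iterate of `f` is monotone. -/
def IsHomterval (f : ℝ → ℝ) (a b : ℝ) : Prop :=
  -1 ≤ a ∧ a < b ∧ b ≤ 1 ∧ (∀ n, noCut f n (Ioo a b)) ∧
  ∀ a' b' : ℝ, -1 ≤ a' → b' ≤ 1 → a' ≤ a → b ≤ b' → (∀ n, noCut f n (Ioo a' b')) →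
    a' = a ∧ b' = b

/-- `(p,q,f^a,f^b)` is a renormalization of the Lorenz map `(fm,fp)` : `p < 0 < q`
are periodic of periods `a`, `b`, `f^a`, `f^b` are monotone on `(p,0)`, `(0,q)` and map
them into `[p,q]`, and the induced map is the first return map to `(p,q)`. -/
def IsRenorm (fm fp : ℝ → ℝ) (p q : ℝ) (a b : ℕ) : Prop :=
  -1 ≤ p ∧ p < 0 ∧ 0 < q ∧ q ≤ 1 ∧ 0 < a ∧ 0 < b ∧
  (lorenzGlue fm fp)^[a] p = p ∧ (lorenzGlue fm fp)^[b] q = q ∧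
  noCut (lorenzGlue fm fp) a (Ioo p 0) ∧ noCut (lorenzGlue fm fp) b (Ioo 0 q) ∧
  MapsTo ((lorenzGlue fm fp)^[a]) (Ico p 0) (Icc p q) ∧
  MapsTo ((lorenzGlue fm fp)^[b]) (Ioc 0 q) (Icc p q) ∧
  (∀ x ∈ Ioo p 0, ∀ i, 0 < i → i < a → (lorenzGlue fm fp)^[i] x ∉ Ioo p q) ∧
  (∀ x ∈ Ioo 0 q, ∀ i, 0 < i → i < b → (lorenzGlue fm fp)^[i] x ∉ Ioo p q)

/-- The renormalization on `(p,q)` with periods `(a,b)` has combinatorial type `(α,β)`: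
`α` resp. `β` is the itinerary word of the branch containing `(p,0)` resp. `(0,q)`. -/
def RenormType (f : ℝ → ℝ) (p q : ℝ) (a b : ℕ) (α β : ℕ → Bool) : Prop :=
  (∀ i < a, (α i = false → f^[i] '' Ioo p 0 ⊆ Ico (-1) 0) ∧
            (α i = true → f^[i] '' Ioo p 0 ⊆ Ioc 0 1)) ∧
  (∀ i < b, (β i = false → f^[i] '' Ioo 0 q ⊆ Ico (-1) 0) ∧
            (β i = true → f^[i] '' Ioo 0 q ⊆ Ioc 0 1))

/-- Membership in the domain of renormalization `D_{α,β}`. -/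
def InDomain (fm fp : ℝ → ℝ) (a b : ℕ) (α β : ℕ → Bool) : Prop :=
  ∃ p q : ℝ, IsRenorm fm fp p q a b ∧ RenormType (lorenzGlue fm fp) p q a b α β

namespace LorenzRigidity

open Set Filter Function Topology

/-- ternary sign -/
def tern (t : ℝ) : ℤ := if t < 0 then -1 else if t = 0 then 0 else 1

lemma tern_of_neg {t : ℝ} (h : t < 0) : tern t = -1 := if_pos h
lemma tern_of_zero {t : ℝ} (h : t = 0) : tern t = 0 := by
  simp [tern, h]
lemma tern_of_pos {t : ℝ} (h : 0 < t) : tern t = 1 := by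
  simp [tern, not_lt.2 h.le, ne_of_gt h]

lemma tern_eq_zero_iff {t : ℝ} : tern t = 0 ↔ t = 0 := by
  constructor
  · intro h
    by_contra hne
    rcases lt_or_gt_of_ne hne with h1 | h1
    · rw [tern_of_neg h1] at h; omega
    · rw [tern_of_pos h1] at h; omega
  · exact tern_of_zero

lemma tern_neg_iff {t : ℝ} : tern t = -1 ↔ t < 0 := by
  constructor
  · intro h
    by_contra hne
    push_neg at hne
    rcases eq_or_lt_of_le hne with h1 | h1
    · rw [tern_of_zero h1.symm] at h; omega
    · rw [tern_of_pos h1] at h; omega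
  · exact tern_of_neg

lemma tern_pos_iff {t : ℝ} : tern t = 1 ↔ 0 < t := by
  constructor
  · intro h
    rcases lt_trichotomy t 0 with h1 | h1 | h1
    · rw [tern_of_neg h1] at h; omega
    · rw [tern_of_zero h1] at h; omega
    · exact h1
  · exact tern_of_pos

lemma tern_nonneg_iff {t : ℝ} : 0 ≤ t ↔ tern t ≠ -1 := by
  rw [← not_lt, ← tern_neg_iff]

lemma tern_mono : Monotone tern := by
  intro u v huv
  rcases lt_trichotomy u 0 with h1 | h1 | h1
  · rw [tern_of_neg h1]
    rcases lt_trichotomy v 0 with h2 | h2 | h2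
    · rw [tern_of_neg h2]
    · rw [tern_of_zero h2]; omega
    · rw [tern_of_pos h2]; omega
  · subst h1
    rw [tern_of_zero rfl]
    rcases eq_or_lt_of_le huv with h2 | h2
    · rw [tern_of_zero h2.symm]
    · rw [tern_of_pos h2]; omega
  · rw [tern_of_pos h1, tern_of_pos (h1.trans_le huv)]

section OneMap

variable {fm fp : ℝ → ℝ}

lemma glue_neg {x : ℝ} (h : x < 0) : lorenzGlue fm fp x = fm x := if_pos h

lemma glue_nonneg {x : ℝ} (h : 0 ≤ x) : lorenzGlue fm fp x = fp x := if_neg (not_lt.2 h)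

variable (hF : IsLorenzPair fm fp)

lemma glue_neg_one (hF : IsLorenzPair fm fp) : lorenzGlue fm fp (-1) = -1 := by
  rw [glue_neg (by norm_num)]; exact hF.2.2.2.2.2.2.1

lemma glue_one (hF : IsLorenzPair fm fp) : lorenzGlue fm fp 1 = 1 := by
  rw [glue_nonneg (by norm_num)]; exact hF.2.2.2.2.2.2.2

lemma iter_neg_one (hF : IsLorenzPair fm fp) (i : ℕ) : (lorenzGlue fm fp)^[i] (-1) = -1 := by
  induction i with
  | zero => rfl
  | succ i ih => rw [Function.iterate_succ_apply', ih, glue_neg_one hF]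

lemma iter_one (hF : IsLorenzPair fm fp) (i : ℕ) : (lorenzGlue fm fp)^[i] 1 = 1 := by
  induction i with
  | zero => rfl
  | succ i ih => rw [Function.iterate_succ_apply', ih, glue_one hF]

lemma glue_mapsTo (hF : IsLorenzPair fm fp) :
    MapsTo (lorenzGlue fm fp) (Icc (-1) 1) (Icc (-1) 1) := by
  intro x hx
  rcases lt_or_ge x 0 with h | h
  · rw [glue_neg h]
    exact hF.2.2.2.2.1 ⟨hx.1, h.le⟩
  · rw [glue_nonneg h]
    exact hF.2.2.2.2.2.1 ⟨h, hx.2⟩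

lemma iter_mapsTo (hF : IsLorenzPair fm fp) (i : ℕ) :
    MapsTo ((lorenzGlue fm fp)^[i]) (Icc (-1) 1) (Icc (-1) 1) :=
  (glue_mapsTo hF).iterate i

lemma glue_mem_open (hF : IsLorenzPair fm fp) {x : ℝ} (hx : x ∈ Ioo (-1:ℝ) 1) (hx0 : x ≠ 0) :
    lorenzGlue fm fp x ∈ Ioo (-1:ℝ) 1 := by
  rcases lt_or_ge x 0 with h | h
  · rw [glue_neg h]
    constructor
    · have := hF.2.2.1 (left_mem_Icc.2 (by norm_num)) ⟨hx.1.le, h.le⟩ hx.1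
      rw [hF.2.2.2.2.2.2.1] at this; exact this
    · have h1 : fm x < fm 0 := hF.2.2.1 ⟨hx.1.le, h.le⟩ (right_mem_Icc.2 (by norm_num)) h
      have h2 : fm 0 ≤ 1 := (hF.2.2.2.2.1 (right_mem_Icc.2 (by norm_num))).2
      linarith
  · have hx0' : 0 < x := lt_of_le_of_ne h (Ne.symm hx0)
    rw [glue_nonneg h]
    constructor
    · have h1 : fp 0 < fp x := hF.2.2.2.1 (left_mem_Icc.2 (by norm_num)) ⟨h, hx.2.le⟩ hx0'
      have h2 : (-1:ℝ) ≤ fp 0 := (hF.2.2.2.2.2.1 (left_mem_Icc.2 (by norm_num))).1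
      linarith
    · have := hF.2.2.2.1 ⟨h, hx.2.le⟩ (right_mem_Icc.2 (by norm_num)) hx.2
      rw [hF.2.2.2.2.2.2.2] at this; exact this

lemma critPos_eq_iter (l : ℕ) : critPos fm fp l = (lorenzGlue fm fp)^[l] 0 := by
  cases l with
  | zero => rfl
  | succ l =>
    show (lorenzGlue fm fp)^[l] (fp 0) = _
    rw [Function.iterate_succ_apply, glue_nonneg le_rfl]

lemma critPos_succ (l : ℕ) :
    critPos fm fp (l + 1) = lorenzGlue fm fp (critPos fm fp l) := by
  rw [critPos_eq_iter, critPos_eq_iter, Function.iterate_succ_apply']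

lemma critNeg_succ {l : ℕ} (hl : 1 ≤ l) :
    critNeg fm fp (l + 1) = lorenzGlue fm fp (critNeg fm fp l) := by
  obtain ⟨m, rfl⟩ := Nat.exists_eq_add_of_le hl
  show (lorenzGlue fm fp)^[1 + m] (fm 0) = _
  rw [Nat.add_comm 1 m, Function.iterate_succ_apply']
  rfl

lemma critNeg_mem (hF : IsLorenzPair fm fp) (l : ℕ) : critNeg fm fp l ∈ Icc (-1:ℝ) 1 := by
  cases l with
  | zero => show (0:ℝ) ∈ Icc (-1:ℝ) 1; constructor <;> norm_num
  | succ l =>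
    exact iter_mapsTo hF l (hF.2.2.2.2.1 (right_mem_Icc.2 (by norm_num)))

lemma critPos_mem (hF : IsLorenzPair fm fp) (l : ℕ) : critPos fm fp l ∈ Icc (-1:ℝ) 1 := by
  rw [critPos_eq_iter]
  exact iter_mapsTo hF l ⟨by norm_num, by norm_num⟩

/-- one-step strict monotonicity when both points are on the same side -/
lemma glue_lt_glue (hF : IsLorenzPair fm fp) {x y : ℝ} (hx : x ∈ Icc (-1:ℝ) 1)
    (hy : y ∈ Icc (-1:ℝ) 1) (hxy : x < y) (hside : y < 0 ∨ 0 ≤ x) :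
    lorenzGlue fm fp x < lorenzGlue fm fp y := by
  rcases hside with h | h
  · rw [glue_neg (hxy.trans h), glue_neg h]
    exact hF.2.2.1 ⟨hx.1, (hxy.trans h).le⟩ ⟨hy.1, h.le⟩ hxy
  · rw [glue_nonneg h, glue_nonneg (h.trans hxy.le)]
    exact hF.2.2.2.1 ⟨h, hx.2⟩ ⟨h.trans hxy.le, hy.2⟩ hxy

lemma iter_lt_iter (hF : IsLorenzPair fm fp) {x y : ℝ} (hx : x ∈ Icc (-1:ℝ) 1)
    (hy : y ∈ Icc (-1:ℝ) 1) (hxy : x < y) {j : ℕ}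
    (hside : ∀ i < j, ((lorenzGlue fm fp)^[i] y < 0 ∨ 0 ≤ (lorenzGlue fm fp)^[i] x)) :
    (lorenzGlue fm fp)^[j] x < (lorenzGlue fm fp)^[j] y := by
  induction j with
  | zero => exact hxy
  | succ j ih =>
    rw [Function.iterate_succ_apply', Function.iterate_succ_apply']
    exact glue_lt_glue hF (iter_mapsTo hF j hx) (iter_mapsTo hF j hy)
      (ih fun i hi => hside i (hi.trans (Nat.lt_succ_self j)))
      (hside j (Nat.lt_succ_self j))

end OneMap

end LorenzRigidity
namespace LorenzRigidity

open Set Filter Function Topology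

section OneMapTopo

variable {fm fp : ℝ → ℝ}

lemma glue_contAt (hF : IsLorenzPair fm fp) {y : ℝ} (hy : y ∈ Ioo (-1:ℝ) 1) (h0 : y ≠ 0) :
    ContinuousAt (lorenzGlue fm fp) y := by
  rcases lt_or_gt_of_ne h0 with h | h
  · have hcm : ContinuousAt fm y :=
      hF.1.continuousAt (Icc_mem_nhds hy.1 h)
    apply hcm.congr
    filter_upwards [Iio_mem_nhds h] with x hx
    exact (glue_neg hx).symm
  · have hcp : ContinuousAt fp y :=
      hF.2.1.continuousAt (Icc_mem_nhds h hy.2)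
    apply hcp.congr
    filter_upwards [Ioi_mem_nhds h] with x hx
    exact (glue_nonneg (le_of_lt hx)).symm

variable {a b : ℝ} {k : ℕ}

lemma iter_interior (hF : IsLorenzPair fm fp) (ha : -1 ≤ a) (hb : b ≤ 1)
    (hc : noCut (lorenzGlue fm fp) k (Ioo a b)) :
    ∀ i ≤ k, MapsTo ((lorenzGlue fm fp)^[i]) (Ioo a b) (Ioo (-1:ℝ) 1) := by
  intro i
  induction i with
  | zero =>
    intro _ x hx
    exact ⟨ha.trans_lt hx.1, hx.2.trans_le hb⟩
  | succ i ih =>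
    intro hik x hx
    rw [Function.iterate_succ_apply']
    exact glue_mem_open hF (ih (Nat.le_of_succ_le hik) hx)
      (hc x hx i (Nat.lt_of_succ_le hik))

lemma iter_contOn (hF : IsLorenzPair fm fp) (ha : -1 ≤ a) (hb : b ≤ 1)
    (hc : noCut (lorenzGlue fm fp) k (Ioo a b)) :
    ∀ i ≤ k, ContinuousOn ((lorenzGlue fm fp)^[i]) (Ioo a b) := by
  intro i
  induction i with
  | zero => intro _; exact continuousOn_id
  | succ i ih =>
    intro hik
    have h1 : ContinuousOn ((lorenzGlue fm fp)^[i]) (Ioo a b) := ih (Nat.le_of_succ_le hik)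
    intro x hx
    have h2 : ContinuousAt (lorenzGlue fm fp) ((lorenzGlue fm fp)^[i] x) :=
      glue_contAt hF (iter_interior hF ha hb hc i (Nat.le_of_succ_le hik) hx)
        (hc x hx i (Nat.lt_of_succ_le hik))
    have := h2.comp_continuousWithinAt (h1 x hx)
    rw [show (lorenzGlue fm fp)^[i+1] = (lorenzGlue fm fp) ∘ (lorenzGlue fm fp)^[i] from
      funext fun z => Function.iterate_succ_apply' _ _ _]
    exact this

lemma sign_const (hF : IsLorenzPair fm fp) (ha : -1 ≤ a) (hb : b ≤ 1)
    (hc : noCut (lorenzGlue fm fp) k (Ioo a b)) {i : ℕ} (hik : i < k) :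
    (∀ x ∈ Ioo a b, (lorenzGlue fm fp)^[i] x < 0) ∨
      (∀ x ∈ Ioo a b, 0 < (lorenzGlue fm fp)^[i] x) := by
  by_contra hcon
  push_neg at hcon
  obtain ⟨⟨u, hu, hu'⟩, ⟨v, hv, hv'⟩⟩ := hcon
  have hu2 : 0 < (lorenzGlue fm fp)^[i] u :=
    lt_of_le_of_ne hu' (Ne.symm (hc u hu i hik))
  have hv2 : (lorenzGlue fm fp)^[i] v < 0 := lt_of_le_of_ne hv' (hc v hv i hik)
  have hsub : uIcc v u ⊆ Ioo a b := Set.ordConnected_Ioo.uIcc_subset hv hu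
  have hcont : ContinuousOn ((lorenzGlue fm fp)^[i]) (uIcc v u) :=
    (iter_contOn hF ha hb hc i hik.le).mono hsub
  have h0 : (0:ℝ) ∈ uIcc ((lorenzGlue fm fp)^[i] v) ((lorenzGlue fm fp)^[i] u) := by
    rw [Set.mem_uIcc]
    exact Or.inl ⟨hv2.le, hu2.le⟩
  obtain ⟨z, hz, hz0⟩ := intermediate_value_uIcc hcont h0
  exact hc z (hsub hz) i hik hz0

end OneMapTopo

end LorenzRigidity
namespace LorenzRigidity

open Set Filter Function Topology

section Tendsto

variable {fm fp : ℝ → ℝ} {a b : ℝ} {k : ℕ}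

lemma tendsto_right (hF : IsLorenzPair fm fp) (ha : -1 ≤ a) (hb : b ≤ 1) (hab : a < b) :
    ∀ i : ℕ, Tendsto ((lorenzGlue fm fp)^[i]) (𝓝[>] a) (𝓝 ((lorenzGlue fm fp)^[i] a)) ∧
      (∀ᶠ x in 𝓝[>] a, (lorenzGlue fm fp)^[i] a < (lorenzGlue fm fp)^[i] x ∧
        (lorenzGlue fm fp)^[i] x ∈ Ioo (-1:ℝ) 1) := by
  have hmemIoo : ∀ᶠ x in 𝓝[>] a, x ∈ Ioo a b :=
    Ioo_mem_nhdsGT_of_mem ⟨le_rfl, hab⟩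
  intro i
  induction i with
  | zero =>
    refine ⟨tendsto_id.mono_left nhdsWithin_le_nhds, ?_⟩
    filter_upwards [hmemIoo, self_mem_nhdsWithin] with x hx hx'
    exact ⟨hx', ⟨ha.trans_lt hx.1, hx.2.trans_le hb⟩⟩
  | succ i ih =>
    obtain ⟨ih1, ih2⟩ := ih
    set F := (lorenzGlue fm fp)^[i] with hFdef
    set V := F a with hV
    have hVmem : V ∈ Icc (-1:ℝ) 1 := iter_mapsTo hF i ⟨ha, hab.le.trans hb⟩
    have hVlt1 : V < 1 := by
      obtain ⟨x, hx⟩ := ih2.exists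
      exact lt_trans hx.1 hx.2.2
    have hiter : (lorenzGlue fm fp)^[i+1] = (lorenzGlue fm fp) ∘ F :=
      funext fun z => Function.iterate_succ_apply' _ _ _
    have hiterA : (lorenzGlue fm fp)^[i+1] a = lorenzGlue fm fp V := by
      rw [hiter]; rfl
    rcases lt_or_ge V 0 with hV0 | hV0
    · have hev : ∀ᶠ x in 𝓝[>] a, F x ∈ Ioo V 0 := by
        filter_upwards [ih2, ih1.eventually (gt_mem_nhds hV0)] with x h1 h2
        exact ⟨h1.1, h2⟩
      have htend : Tendsto F (𝓝[>] a) (𝓝[Icc (-1:ℝ) 0] V) := by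
        rw [tendsto_nhdsWithin_iff]
        refine ⟨ih1, ?_⟩
        filter_upwards [hev] with x hx
        exact ⟨hVmem.1.trans hx.1.le, hx.2.le⟩
      have hfm : Tendsto fm (𝓝[Icc (-1:ℝ) 0] V) (𝓝 (fm V)) :=
        hF.1 V ⟨hVmem.1, hV0.le⟩
      constructor
      · rw [hiter]
        simp only [Function.comp_apply]
        rw [← hV, glue_neg hV0]
        apply (hfm.comp htend).congr'
        filter_upwards [hev] with x hx
        exact (glue_neg hx.2).symm
      · rw [hiter]
        simp only [Function.comp_apply]
        rw [← hV]
        filter_upwards [hev, ih2] with x hx hx2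
        constructor
        · rw [glue_neg hx.2, glue_neg hV0]
          exact hF.2.2.1 ⟨hVmem.1, hV0.le⟩ ⟨hVmem.1.trans hx.1.le, hx.2.le⟩ hx.1
        · exact glue_mem_open hF hx2.2 (ne_of_lt hx.2)
    · have hev : ∀ᶠ x in 𝓝[>] a, F x ∈ Ioo V 1 := by
        filter_upwards [ih2] with x h1
        exact ⟨h1.1, h1.2.2⟩
      have htend : Tendsto F (𝓝[>] a) (𝓝[Icc (0:ℝ) 1] V) := by
        rw [tendsto_nhdsWithin_iff]
        refine ⟨ih1, ?_⟩
        filter_upwards [hev] with x hx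
        exact ⟨hV0.trans hx.1.le, hx.2.le⟩
      have hfp : Tendsto fp (𝓝[Icc (0:ℝ) 1] V) (𝓝 (fp V)) :=
        hF.2.1 V ⟨hV0, hVmem.2⟩
      constructor
      · rw [hiter]
        simp only [Function.comp_apply]
        rw [← hV, glue_nonneg hV0]
        apply (hfp.comp htend).congr'
        filter_upwards [hev] with x hx
        exact (glue_nonneg (hV0.trans hx.1.le)).symm
      · rw [hiter]
        simp only [Function.comp_apply]
        rw [← hV]
        filter_upwards [hev, ih2] with x hx hx2
        constructor
        · rw [glue_nonneg (hV0.trans hx.1.le), glue_nonneg hV0]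
          exact hF.2.2.2.1 ⟨hV0, hVmem.2⟩ ⟨hV0.trans hx.1.le, hx.2.le⟩ hx.1
        · exact glue_mem_open hF hx2.2 (ne_of_gt (hV0.trans_lt hx.1))

/-- the itinerary word of a branch interior is determined by (the closure of) the
orbit of the left endpoint. -/
lemma word_of_branch (hF : IsLorenzPair fm fp) (ha : -1 ≤ a) (hb : b ≤ 1) (hab : a < b)
    (hc : noCut (lorenzGlue fm fp) k (Ioo a b)) {i : ℕ} (hik : i < k) :
    ∀ x ∈ Ioo a b, (lorenzGlue fm fp)^[i] x ∈ Ioo (-1:ℝ) 1 ∧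
      (0 ≤ (lorenzGlue fm fp)^[i] a ↔ 0 < (lorenzGlue fm fp)^[i] x) := by
  have hIoo := iter_interior hF ha hb hc i hik.le
  obtain ⟨h1, h2⟩ := tendsto_right hF ha hb hab i
  have hmemIoo : ∀ᶠ x in 𝓝[>] a, x ∈ Ioo a b :=
    Ioo_mem_nhdsGT_of_mem ⟨le_rfl, hab⟩
  rcases sign_const hF ha hb hc hik with hneg | hpos
  · -- everything negative; must show ¬ 0 ≤ f^i a
    have hwit : ∃ x ∈ Ioo a b, (lorenzGlue fm fp)^[i] a < (lorenzGlue fm fp)^[i] x := by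
      obtain ⟨x, hx⟩ := (h2.and hmemIoo).exists
      exact ⟨x, hx.2, hx.1.1⟩
    obtain ⟨x0, hx0, hx0'⟩ := hwit
    have hneg' : (lorenzGlue fm fp)^[i] a < 0 := hx0'.trans (hneg x0 hx0)
    intro x hx
    refine ⟨hIoo hx, ?_⟩
    constructor
    · intro h; exact absurd hneg' (not_lt.2 h)
    · intro h; exact absurd (hneg x hx) (not_lt.2 h.le)
  · intro x hx
    refine ⟨hIoo hx, ?_⟩
    constructor
    · intro _; exact hpos x hx
    · intro _
      -- show 0 ≤ f^i a : otherwise eventually f^i x < 0, contradiction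
      by_contra hcon
      push_neg at hcon
      have : ∀ᶠ y in 𝓝[>] a, (lorenzGlue fm fp)^[i] y < 0 :=
        h1.eventually (gt_mem_nhds hcon)
      obtain ⟨y, hy⟩ := (this.and hmemIoo).exists
      exact absurd (hpos y hy.2) (not_lt.2 hy.1.le)

end Tendsto

end LorenzRigidity
namespace LorenzRigidity

open Set Filter Function Topology

section Finite

variable {fm fp : ℝ → ℝ}

/-- the set of points in `[-1,1]` cut at exact time `i` -/
lemma level_finite (hF : IsLorenzPair fm fp) (i : ℕ) :
    Set.Finite {x : ℝ | x ∈ Icc (-1:ℝ) 1 ∧ (lorenzGlue fm fp)^[i] x = 0} := by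
  induction i with
  | zero =>
    apply Set.Finite.subset (Set.finite_singleton 0)
    intro x hx
    exact hx.2
  | succ i ih =>
    have hsub : {x : ℝ | x ∈ Icc (-1:ℝ) 1 ∧ (lorenzGlue fm fp)^[i+1] x = 0} ⊆
        ⋃ y ∈ {x : ℝ | x ∈ Icc (-1:ℝ) 1 ∧ (lorenzGlue fm fp)^[i] x = 0},
          {x : ℝ | x ∈ Icc (-1:ℝ) 1 ∧ lorenzGlue fm fp x = y} := by
      intro x hx
      rw [Set.mem_iUnion₂]
      refine ⟨lorenzGlue fm fp x, ⟨glue_mapsTo hF hx.1, ?_⟩, hx.1, rfl⟩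
      rw [← Function.iterate_succ_apply]
      exact hx.2
    apply Set.Finite.subset _ hsub
    apply Set.Finite.biUnion ih
    intro y _
    have h1 : {x : ℝ | x ∈ Icc (-1:ℝ) 1 ∧ lorenzGlue fm fp x = y} ⊆
        {x : ℝ | x ∈ Icc (-1:ℝ) 0 ∧ fm x = y} ∪ {x : ℝ | x ∈ Icc (0:ℝ) 1 ∧ fp x = y} := by
      intro x hx
      rcases lt_or_ge x 0 with h | h
      · left; exact ⟨⟨hx.1.1, h.le⟩, by rw [← hx.2, glue_neg h]⟩
      · right; exact ⟨⟨h, hx.1.2⟩, by rw [← hx.2, glue_nonneg h]⟩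
    apply Set.Finite.subset _ h1
    apply Set.Finite.union
    · apply Set.Subsingleton.finite
      intro u hu v hv
      exact hF.2.2.1.injOn hu.1 hv.1 (hu.2.trans hv.2.symm)
    · apply Set.Subsingleton.finite
      intro u hu v hv
      exact hF.2.2.2.1.injOn hu.1 hv.1 (hu.2.trans hv.2.symm)

lemma cut_finite (hF : IsLorenzPair fm fp) (k : ℕ) :
    Set.Finite {x : ℝ | x ∈ Icc (-1:ℝ) 1 ∧ ∃ i < k, (lorenzGlue fm fp)^[i] x = 0} := by
  have : {x : ℝ | x ∈ Icc (-1:ℝ) 1 ∧ ∃ i < k, (lorenzGlue fm fp)^[i] x = 0} ⊆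
      ⋃ i ∈ Finset.range k, {x : ℝ | x ∈ Icc (-1:ℝ) 1 ∧ (lorenzGlue fm fp)^[i] x = 0} := by
    intro x hx
    obtain ⟨i, hi, h0⟩ := hx.2
    rw [Set.mem_iUnion₂]
    exact ⟨i, Finset.mem_range.2 hi, hx.1, h0⟩
  exact Set.Finite.subset (Set.Finite.biUnion (Finset.range k).finite_toSet
    (fun i _ => level_finite hF i)) this

/-- characterization of branches -/
lemma isBranch_iff (hF : IsLorenzPair fm fp) {k : ℕ} {a b : ℝ} :
    IsBranch (lorenzGlue fm fp) k a b ↔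
      (-1 ≤ a ∧ a < b ∧ b ≤ 1 ∧ noCut (lorenzGlue fm fp) k (Ioo a b) ∧
        (a = -1 ∨ ∃ i < k, (lorenzGlue fm fp)^[i] a = 0) ∧
        (b = 1 ∨ ∃ i < k, (lorenzGlue fm fp)^[i] b = 0)) := by
  constructor
  · rintro ⟨ha, hab, hb, hc, hmax⟩
    refine ⟨ha, hab, hb, hc, ?_, ?_⟩
    · by_contra hcon
      push_neg at hcon
      obtain ⟨hane, hacut⟩ := hcon
      have ha1 : -1 < a := lt_of_le_of_ne ha (Ne.symm hane)
      -- finite set of cuts below a, including -1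
      set C := {x : ℝ | x ∈ Icc (-1:ℝ) 1 ∧ ∃ i < k, (lorenzGlue fm fp)^[i] x = 0} with hC
      have hCfin : Set.Finite (insert (-1:ℝ) (C ∩ Iio a)) :=
        Set.Finite.insert _ ((cut_finite hF k).inter_of_left _)
      set T := hCfin.toFinset with hT
      have hne : T.Nonempty := ⟨-1, by simp [hT]⟩
      set s := T.max' hne with hs
      have hsmem : s ∈ T := T.max'_mem hne
      have hs1 : -1 ≤ s := by
        apply T.le_max'
        simp [hT]
      have hsa : s < a := by
        have : s ∈ insert (-1:ℝ) (C ∩ Iio a) := by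
          rw [hT] at hsmem
          exact hCfin.mem_toFinset.1 hsmem
        rcases this with h | h
        · rw [h]; exact ha1
        · exact h.2
      have hnc : noCut (lorenzGlue fm fp) k (Ioo s b) := by
        intro x hx i hi h0
        have hxIcc : x ∈ Icc (-1:ℝ) 1 := ⟨hs1.trans hx.1.le, hx.2.le.trans hb⟩
        have hxC : x ∈ C := ⟨hxIcc, i, hi, h0⟩
        rcases lt_trichotomy x a with hlt | heq | hgt
        · have : x ∈ T := by
            rw [hT, hCfin.mem_toFinset]
            exact Or.inr ⟨hxC, hlt⟩
          exact absurd (T.le_max' x this) (not_le.2 hx.1)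
        · exact hacut i hi (heq ▸ h0)
        · exact hc x ⟨hgt, hx.2⟩ i hi h0
      have := (hmax s b hs1 hb hsa.le le_rfl hnc).1
      exact absurd this (ne_of_lt hsa)
    · by_contra hcon
      push_neg at hcon
      obtain ⟨hbne, hbcut⟩ := hcon
      have hb1 : b < 1 := lt_of_le_of_ne hb hbne
      set C := {x : ℝ | x ∈ Icc (-1:ℝ) 1 ∧ ∃ i < k, (lorenzGlue fm fp)^[i] x = 0} with hC
      have hCfin : Set.Finite (insert (1:ℝ) (C ∩ Ioi b)) :=
        Set.Finite.insert _ ((cut_finite hF k).inter_of_left _)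
      set T := hCfin.toFinset with hT
      have hne : T.Nonempty := ⟨1, by simp [hT]⟩
      set s := T.min' hne with hs
      have hsmem : s ∈ T := T.min'_mem hne
      have hs1 : s ≤ 1 := by
        apply T.min'_le
        simp [hT]
      have hsb : b < s := by
        have : s ∈ insert (1:ℝ) (C ∩ Ioi b) := by
          rw [hT] at hsmem
          exact hCfin.mem_toFinset.1 hsmem
        rcases this with h | h
        · rw [h]; exact hb1
        · exact h.2
      have hnc : noCut (lorenzGlue fm fp) k (Ioo a s) := by
        intro x hx i hi h0
        have hxIcc : x ∈ Icc (-1:ℝ) 1 := ⟨ha.trans hx.1.le, hx.2.le.trans hs1⟩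
        have hxC : x ∈ C := ⟨hxIcc, i, hi, h0⟩
        rcases lt_trichotomy x b with hlt | heq | hgt
        · exact hc x ⟨hx.1, hlt⟩ i hi h0
        · exact hbcut i hi (heq ▸ h0)
        · have : x ∈ T := by
            rw [hT, hCfin.mem_toFinset]
            exact Or.inr ⟨hxC, hgt⟩
          exact absurd (T.min'_le x this) (not_le.2 hx.2)
      have := (hmax a s ha hs1 le_rfl hsb.le hnc).2
      exact absurd this.symm (ne_of_lt hsb)
  · rintro ⟨ha, hab, hb, hc, hacut, hbcut⟩
    refine ⟨ha, hab, hb, hc, ?_⟩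
    intro a' b' ha' hb' haa hbb hnc
    constructor
    · by_contra hne
      have ha'a : a' < a := lt_of_le_of_ne haa hne
      rcases hacut with h | ⟨i, hi, h0⟩
      · exact absurd (le_antisymm (h ▸ haa) (h ▸ ha')) hne
      · exact hnc a ⟨ha'a, hab.trans_le hbb⟩ i hi h0
    · by_contra hne
      have hbb' : b < b' := lt_of_le_of_ne hbb (Ne.symm hne)
      rcases hbcut with h | ⟨i, hi, h0⟩
      · exact hne (by rw [h]; linarith [h ▸ hbb])
      · exact hnc b ⟨(haa.trans_lt hab), hbb'⟩ i hi h0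

end Finite

end LorenzRigidity
namespace LorenzRigidity

open Set Filter Function Topology

/-! ### symbolic tags for endpoints of critical-value intervals -/

inductive Tag where
  | neg (l : ℕ)
  | pos (l : ℕ)
  | negone
  | one
deriving DecidableEq

def tagVal (fm fp : ℝ → ℝ) : Tag → ℝ
  | .neg l => critNeg fm fp l
  | .pos l => critPos fm fp l
  | .negone => -1
  | .one => 1

def tagIdx : Tag → ℕ
  | .neg l => l
  | .pos l => l
  | .negone => 0
  | .one => 0

open Classical in
noncomputable def mTag (fm fp : ℝ → ℝ) : Tag → Tag
  | .neg l => if critNeg fm fp l = 0 then .neg 1 else .neg (l + 1)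
  | .pos l => if critPos fm fp l = 0 then .neg 1 else .pos (l + 1)
  | .negone => .negone
  | .one => .one

open Classical in
noncomputable def pTag (fm fp : ℝ → ℝ) : Tag → Tag
  | .neg l => if critNeg fm fp l = 0 then .pos 1 else .neg (l + 1)
  | .pos l => if critPos fm fp l = 0 then .pos 1 else .pos (l + 1)
  | .negone => .negone
  | .one => .one

open Classical in
noncomputable def stepT (fm fp : ℝ → ℝ) (ε : Bool) (T : Tag × Tag) : Tag × Tag :=
  match ε with
  | true =>
    if tagVal fm fp T.2 ≤ 0 then (.pos 0, .pos 0)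
    else (pTag fm fp (if 0 < tagVal fm fp T.1 then T.1 else .pos 0), pTag fm fp T.2)
  | false =>
    if 0 ≤ tagVal fm fp T.1 then (.pos 0, .pos 0)
    else (mTag fm fp T.1, mTag fm fp (if tagVal fm fp T.2 < 0 then T.2 else .pos 0))

section TagLemmas

variable {fm fp : ℝ → ℝ}

lemma tagVal_pos_zero : tagVal fm fp (.pos 0) = 0 := rfl

lemma tagVal_mem (hF : IsLorenzPair fm fp) (t : Tag) : tagVal fm fp t ∈ Icc (-1:ℝ) 1 := by
  cases t with
  | neg l => exact critNeg_mem hF l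
  | pos l => exact critPos_mem hF l
  | negone => simp [tagVal]
  | one => simp [tagVal]

lemma critNeg_zero_lvl {l : ℕ} (h : critNeg fm fp l ≠ 0) : 1 ≤ l := by
  rcases Nat.eq_zero_or_pos l with rfl | h1
  · exact absurd rfl h
  · exact h1

lemma mTag_val (hF : IsLorenzPair fm fp) {t : Tag} (ht : tagVal fm fp t ≤ 0) :
    fm (tagVal fm fp t) = tagVal fm fp (mTag fm fp t) := by
  cases t with
  | neg l =>
    show fm (critNeg fm fp l) = _
    simp only [mTag]
    split_ifs with h
    · rw [h]; rfl
    · have hlt : critNeg fm fp l < 0 := lt_of_le_of_ne ht h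
      show _ = critNeg fm fp (l + 1)
      rw [critNeg_succ (critNeg_zero_lvl h), glue_neg hlt]
  | pos l =>
    show fm (critPos fm fp l) = _
    simp only [mTag]
    split_ifs with h
    · rw [h]; rfl
    · have hlt : critPos fm fp l < 0 := lt_of_le_of_ne ht h
      show _ = critPos fm fp (l + 1)
      rw [critPos_succ, glue_neg hlt]
  | negone =>
    show fm (-1) = (-1:ℝ)
    exact hF.2.2.2.2.2.2.1
  | one => exact absurd ht (by norm_num [tagVal])

lemma pTag_val (hF : IsLorenzPair fm fp) {t : Tag} (ht : 0 ≤ tagVal fm fp t) :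
    fp (tagVal fm fp t) = tagVal fm fp (pTag fm fp t) := by
  cases t with
  | neg l =>
    show fp (critNeg fm fp l) = _
    simp only [pTag]
    split_ifs with h
    · rw [h]; rfl
    · have hlt : 0 < critNeg fm fp l := lt_of_le_of_ne ht (Ne.symm h)
      show _ = critNeg fm fp (l + 1)
      rw [critNeg_succ (critNeg_zero_lvl h), glue_nonneg hlt.le]
  | pos l =>
    show fp (critPos fm fp l) = _
    simp only [pTag]
    split_ifs with h
    · rw [h]; rfl
    · show _ = critPos fm fp (l + 1)
      have ht' : (0:ℝ) ≤ critPos fm fp l := ht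
      rw [critPos_succ, glue_nonneg ht']
  | negone => exact absurd ht (by norm_num [tagVal])
  | one =>
    show fp 1 = (1:ℝ)
    exact hF.2.2.2.2.2.2.2

lemma mTag_idx (t : Tag) : tagIdx (mTag fm fp t) ≤ tagIdx t + 1 := by
  cases t with
  | neg l => simp only [mTag]; split_ifs <;> simp [tagIdx]
  | pos l => simp only [mTag]; split_ifs <;> simp [tagIdx]
  | negone => simp [mTag, tagIdx]
  | one => simp [mTag, tagIdx]

lemma pTag_idx (t : Tag) : tagIdx (pTag fm fp t) ≤ tagIdx t + 1 := by
  cases t with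
  | neg l => simp only [pTag]; split_ifs <;> simp [tagIdx]
  | pos l => simp only [pTag]; split_ifs <;> simp [tagIdx]
  | negone => simp [pTag, tagIdx]
  | one => simp [pTag, tagIdx]

lemma stepT_idx (ε : Bool) (T : Tag × Tag) :
    tagIdx (stepT fm fp ε T).1 ≤ max (tagIdx T.1) (tagIdx T.2) + 1 ∧
    tagIdx (stepT fm fp ε T).2 ≤ max (tagIdx T.1) (tagIdx T.2) + 1 := by
  have hm1 : tagIdx T.1 ≤ max (tagIdx T.1) (tagIdx T.2) := Nat.le_max_left _ _
  have hm2 : tagIdx T.2 ≤ max (tagIdx T.1) (tagIdx T.2) := Nat.le_max_right _ _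
  set M := max (tagIdx T.1) (tagIdx T.2) with hM
  clear_value M
  have h1 := mTag_idx (fm := fm) (fp := fp) T.1
  have h2 := mTag_idx (fm := fm) (fp := fp) T.2
  have h3 := pTag_idx (fm := fm) (fp := fp) T.1
  have h4 := pTag_idx (fm := fm) (fp := fp) T.2
  have h5 := mTag_idx (fm := fm) (fp := fp) (.pos 0)
  have h6 := pTag_idx (fm := fm) (fp := fp) (.pos 0)
  have h7 : tagIdx (Tag.pos 0) = 0 := rfl
  cases ε with
  | false =>
    simp only [stepT]
    split_ifs <;> constructor <;> dsimp only <;> omega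
  | true =>
    simp only [stepT]
    split_ifs <;> constructor <;> dsimp only <;> omega

end TagLemmas

/-! ### semantics -/

def It (F : ℝ → ℝ) : List Bool → ℝ → Prop
  | [], x => x = 0
  | ε :: w, x => (if ε then 0 < x else x < 0) ∧ It F w (F x)

def RealW (F : ℝ → ℝ) (u v : ℝ) (w : List Bool) : Prop :=
  ∃ x ∈ Ioo u v, It F w x

lemma real_nil {F : ℝ → ℝ} {u v : ℝ} : RealW F u v [] ↔ u < 0 ∧ 0 < v := by
  constructor
  · rintro ⟨x, hx, h0⟩
    rw [show x = 0 from h0] at hx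
    exact ⟨hx.1, hx.2⟩
  · rintro ⟨h1, h2⟩
    exact ⟨0, ⟨h1, h2⟩, rfl⟩

lemma real_empty {F : ℝ → ℝ} {c : ℝ} {w : List Bool} : ¬ RealW F c c w := by
  rintro ⟨x, hx, -⟩
  exact absurd (hx.1.trans hx.2) (lt_irrefl c)

section StepSem

variable {fm fp : ℝ → ℝ}

lemma img_m (hF : IsLorenzPair fm fp) {u m : ℝ} (hu : u ∈ Icc (-1:ℝ) 0)
    (hm : m ∈ Icc (-1:ℝ) 0) : fm '' Ioo u m = Ioo (fm u) (fm m) := by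
  rcases le_or_gt m u with h | h
  · rw [Ioo_eq_empty (not_lt.2 h), Ioo_eq_empty, Set.image_empty]
    exact not_lt.2 (hF.2.2.1.monotoneOn hm hu h)
  · apply Set.Subset.antisymm
    · rintro y ⟨x, hx, rfl⟩
      have hxm : x ∈ Icc (-1:ℝ) 0 := ⟨hu.1.trans hx.1.le, hx.2.le.trans hm.2⟩
      exact ⟨hF.2.2.1 hu hxm hx.1, hF.2.2.1 hxm hm hx.2⟩
    · exact intermediate_value_Ioo h.le (hF.1.mono (Icc_subset_Icc hu.1 hm.2))

lemma img_p (hF : IsLorenzPair fm fp) {u m : ℝ} (hu : u ∈ Icc (0:ℝ) 1)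
    (hm : m ∈ Icc (0:ℝ) 1) : fp '' Ioo u m = Ioo (fp u) (fp m) := by
  rcases le_or_gt m u with h | h
  · rw [Ioo_eq_empty (not_lt.2 h), Ioo_eq_empty, Set.image_empty]
    exact not_lt.2 (hF.2.2.2.1.monotoneOn hm hu h)
  · apply Set.Subset.antisymm
    · rintro y ⟨x, hx, rfl⟩
      have hxm : x ∈ Icc (0:ℝ) 1 := ⟨hu.1.trans hx.1.le, hx.2.le.trans hm.2⟩
      exact ⟨hF.2.2.2.1 hu hxm hx.1, hF.2.2.2.1 hxm hm hx.2⟩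
    · exact intermediate_value_Ioo h.le (hF.2.1.mono (Icc_subset_Icc hu.1 hm.2))

lemma real_cons_neg (hF : IsLorenzPair fm fp) {u v : ℝ} (hu : u ∈ Icc (-1:ℝ) 1)
    (hv : v ∈ Icc (-1:ℝ) 1) (hu0 : u < 0) (w : List Bool) :
    RealW (lorenzGlue fm fp) u v (false :: w) ↔
      RealW (lorenzGlue fm fp) (fm u) (fm (min v 0)) w := by
  have key : RealW (lorenzGlue fm fp) u v (false :: w) ↔
      ∃ x ∈ Ioo u (min v 0), It (lorenzGlue fm fp) w (fm x) := by
    constructor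
    · rintro ⟨x, hx, hneg, hit⟩
      rw [if_neg (Bool.false_ne_true)] at hneg
      refine ⟨x, ⟨hx.1, lt_min hx.2 hneg⟩, ?_⟩
      rwa [glue_neg hneg] at hit
    · rintro ⟨x, hx, hit⟩
      have hxneg : x < 0 := hx.2.trans_le (min_le_right v 0)
      exact ⟨x, ⟨hx.1, hx.2.trans_le (min_le_left v 0)⟩,
        by rw [if_neg (Bool.false_ne_true)]; exact hxneg, by rwa [glue_neg hxneg]⟩
  rw [key]
  have himg := img_m hF (u := u) (m := min v 0) ⟨hu.1, hu0.le⟩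
    ⟨le_min hv.1 (by norm_num), min_le_right v 0⟩
  unfold RealW
  rw [← himg]
  constructor
  · rintro ⟨x, hx, hit⟩
    exact ⟨fm x, Set.mem_image_of_mem fm hx, hit⟩
  · rintro ⟨y, ⟨x, hx, rfl⟩, hit⟩
    exact ⟨x, hx, hit⟩

lemma real_cons_pos (hF : IsLorenzPair fm fp) {u v : ℝ} (hu : u ∈ Icc (-1:ℝ) 1)
    (hv : v ∈ Icc (-1:ℝ) 1) (hv0 : 0 < v) (w : List Bool) :
    RealW (lorenzGlue fm fp) u v (true :: w) ↔
      RealW (lorenzGlue fm fp) (fp (max u 0)) (fp v) w := by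
  have key : RealW (lorenzGlue fm fp) u v (true :: w) ↔
      ∃ x ∈ Ioo (max u 0) v, It (lorenzGlue fm fp) w (fp x) := by
    constructor
    · rintro ⟨x, hx, hpos, hit⟩
      rw [if_pos rfl] at hpos
      refine ⟨x, ⟨max_lt hx.1 hpos, hx.2⟩, ?_⟩
      rwa [glue_nonneg hpos.le] at hit
    · rintro ⟨x, hx, hit⟩
      have hxpos : 0 < x := (le_max_right u 0).trans_lt hx.1
      exact ⟨x, ⟨(le_max_left u 0).trans_lt hx.1, hx.2⟩,
        by rw [if_pos rfl]; exact hxpos, by rwa [glue_nonneg hxpos.le]⟩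
  rw [key]
  have himg := img_p hF (u := max u 0) (m := v) ⟨le_max_right u 0, max_le hu.2 (by norm_num)⟩
    ⟨hv0.le, hv.2⟩
  unfold RealW
  rw [← himg]
  constructor
  · rintro ⟨x, hx, hit⟩
    exact ⟨fp x, Set.mem_image_of_mem fp hx, hit⟩
  · rintro ⟨y, ⟨x, hx, rfl⟩, hit⟩
    exact ⟨x, hx, hit⟩

lemma real_cons_neg_empty {F : ℝ → ℝ} {u v : ℝ} (hu0 : 0 ≤ u) (w : List Bool) :
    ¬ RealW F u v (false :: w) := by
  rintro ⟨x, hx, hneg, -⟩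
  rw [if_neg (Bool.false_ne_true)] at hneg
  exact absurd (hu0.trans_lt hx.1) (not_lt.2 hneg.le)

lemma real_cons_pos_empty {F : ℝ → ℝ} {u v : ℝ} (hv0 : v ≤ 0) (w : List Bool) :
    ¬ RealW F u v (true :: w) := by
  rintro ⟨x, hx, hpos, -⟩
  rw [if_pos rfl] at hpos
  exact absurd (hx.2.trans_le hv0) (not_lt.2 hpos.le)

lemma real_stepT (hF : IsLorenzPair fm fp) (ε : Bool) (T : Tag × Tag) (w : List Bool) :
    RealW (lorenzGlue fm fp) (tagVal fm fp T.1) (tagVal fm fp T.2) (ε :: w) ↔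
      RealW (lorenzGlue fm fp) (tagVal fm fp (stepT fm fp ε T).1)
        (tagVal fm fp (stepT fm fp ε T).2) w := by
  cases ε with
  | false =>
    simp only [stepT]
    split_ifs with h h2
    · exact iff_of_false (real_cons_neg_empty h w) real_empty
    · push_neg at h
      rw [real_cons_neg hF (tagVal_mem hF T.1) (tagVal_mem hF T.2) h w]
      dsimp only
      rw [← mTag_val hF h.le, ← mTag_val hF h2.le, min_eq_left h2.le]
    · push_neg at h
      rw [real_cons_neg hF (tagVal_mem hF T.1) (tagVal_mem hF T.2) h w]
      dsimp only
      rw [← mTag_val hF h.le, ← mTag_val hF (le_of_eq tagVal_pos_zero),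
        min_eq_right (not_lt.1 h2), tagVal_pos_zero]
  | true =>
    simp only [stepT]
    split_ifs with h h2
    · exact iff_of_false (real_cons_pos_empty h w) real_empty
    · push_neg at h
      rw [real_cons_pos hF (tagVal_mem hF T.1) (tagVal_mem hF T.2) h w]
      dsimp only
      rw [← pTag_val hF h2.le, ← pTag_val hF h.le, max_eq_left h2.le]
    · push_neg at h
      rw [real_cons_pos hF (tagVal_mem hF T.1) (tagVal_mem hF T.2) h w]
      dsimp only
      rw [← pTag_val hF (ge_of_eq tagVal_pos_zero), ← pTag_val hF h.le,
        max_eq_right (not_lt.1 h2), tagVal_pos_zero]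

end StepSem

end LorenzRigidity
namespace LorenzRigidity

open Set Filter Function Topology

/-- derive all sign comparisons from the two given ones -/
lemma sign_match {x y : ℝ} (h1 : 0 < x ↔ 0 < y) (h2 : x = 0 ↔ y = 0) :
    (x < 0 ↔ y < 0) ∧ (0 ≤ x ↔ 0 ≤ y) ∧ (x ≤ 0 ↔ y ≤ 0) := by
  constructor
  · constructor
    · intro hx
      rcases lt_trichotomy y 0 with h | h | h
      · exact h
      · exact absurd (h2.2 h) (ne_of_lt hx)
      · exact absurd (h1.2 h) (not_lt.2 hx.le)
    · intro hy
      rcases lt_trichotomy x 0 with h | h | h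
      · exact h
      · exact absurd (h2.1 h) (ne_of_lt hy)
      · exact absurd (h1.1 h) (not_lt.2 hy.le)
  · constructor
    · constructor
      · intro hx
        rcases eq_or_lt_of_le hx with h | h
        · exact (h2.1 h.symm).symm.le
        · exact (h1.1 h).le
      · intro hy
        rcases eq_or_lt_of_le hy with h | h
        · exact (h2.2 h.symm).symm.le
        · exact (h1.2 h).le
    · constructor
      · intro hx
        rcases lt_trichotomy y 0 with h' | h' | h'
        · exact h'.le
        · exact h'.le
        · exact absurd (h1.2 h') (not_lt.2 hx)
      · intro hy
        rcases lt_trichotomy x 0 with h' | h' | h'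
        · exact h'.le
        · exact h'.le
        · exact absurd (h1.1 h') (not_lt.2 hy)

section TwoMaps

variable {fm fp gm gp : ℝ → ℝ} {n : ℕ}

variable (hKneg : ∀ i ≤ n, (0 < critNeg fm fp i ↔ 0 < critNeg gm gp i) ∧
      (critNeg fm fp i = 0 ↔ critNeg gm gp i = 0))
variable (hKpos : ∀ i ≤ n, (0 < critPos fm fp i ↔ 0 < critPos gm gp i) ∧
      (critPos fm fp i = 0 ↔ critPos gm gp i = 0))

include hKneg hKpos in
lemma tag_match {t : Tag} (ht : tagIdx t ≤ n) :
    (0 < tagVal fm fp t ↔ 0 < tagVal gm gp t) ∧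
    (tagVal fm fp t = 0 ↔ tagVal gm gp t = 0) ∧
    (tagVal fm fp t < 0 ↔ tagVal gm gp t < 0) ∧
    (0 ≤ tagVal fm fp t ↔ 0 ≤ tagVal gm gp t) ∧
    (tagVal fm fp t ≤ 0 ↔ tagVal gm gp t ≤ 0) := by
  cases t with
  | neg l =>
    obtain ⟨h1, h2⟩ := hKneg l ht
    obtain ⟨h3, h4, h5⟩ := sign_match h1 h2
    exact ⟨h1, h2, h3, h4, h5⟩
  | pos l =>
    obtain ⟨h1, h2⟩ := hKpos l ht
    obtain ⟨h3, h4, h5⟩ := sign_match h1 h2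
    exact ⟨h1, h2, h3, h4, h5⟩
  | negone => refine ⟨?_, ?_, ?_, ?_, ?_⟩ <;> norm_num [tagVal]
  | one => refine ⟨?_, ?_, ?_, ?_, ?_⟩ <;> norm_num [tagVal]

include hKneg hKpos in
lemma mTag_sync {t : Tag} (ht : tagIdx t ≤ n) : mTag fm fp t = mTag gm gp t := by
  cases t with
  | neg l =>
    simp only [mTag]
    by_cases h : critNeg fm fp l = 0
    · rw [if_pos h, if_pos ((hKneg l ht).2.1 h)]
    · rw [if_neg h, if_neg (fun hc => h ((hKneg l ht).2.2 hc))]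
  | pos l =>
    simp only [mTag]
    by_cases h : critPos fm fp l = 0
    · rw [if_pos h, if_pos ((hKpos l ht).2.1 h)]
    · rw [if_neg h, if_neg (fun hc => h ((hKpos l ht).2.2 hc))]
  | negone => rfl
  | one => rfl

include hKneg hKpos in
lemma pTag_sync {t : Tag} (ht : tagIdx t ≤ n) : pTag fm fp t = pTag gm gp t := by
  cases t with
  | neg l =>
    simp only [pTag]
    by_cases h : critNeg fm fp l = 0
    · rw [if_pos h, if_pos ((hKneg l ht).2.1 h)]
    · rw [if_neg h, if_neg (fun hc => h ((hKneg l ht).2.2 hc))]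
  | pos l =>
    simp only [pTag]
    by_cases h : critPos fm fp l = 0
    · rw [if_pos h, if_pos ((hKpos l ht).2.1 h)]
    · rw [if_neg h, if_neg (fun hc => h ((hKpos l ht).2.2 hc))]
  | negone => rfl
  | one => rfl

include hKneg hKpos in
lemma stepT_sync (ε : Bool) {T : Tag × Tag} (h1 : tagIdx T.1 ≤ n) (h2 : tagIdx T.2 ≤ n) :
    stepT fm fp ε T = stepT gm gp ε T := by
  cases ε with
  | false =>
    simp only [stepT]
    by_cases h : 0 ≤ tagVal fm fp T.1
    · rw [if_pos h, if_pos ((tag_match hKneg hKpos h1).2.2.2.1.1 h)]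
    · rw [if_neg h, if_neg (fun hc => h ((tag_match hKneg hKpos h1).2.2.2.1.2 hc))]
      rw [mTag_sync hKneg hKpos h1]
      by_cases hv : tagVal fm fp T.2 < 0
      · rw [if_pos hv, if_pos ((tag_match hKneg hKpos h2).2.2.1.1 hv),
          mTag_sync hKneg hKpos h2]
      · rw [if_neg hv, if_neg (fun hc => hv ((tag_match hKneg hKpos h2).2.2.1.2 hc)),
          mTag_sync hKneg hKpos (t := Tag.pos 0) (Nat.zero_le n)]
  | true =>
    simp only [stepT]
    by_cases h : tagVal fm fp T.2 ≤ 0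
    · rw [if_pos h, if_pos ((tag_match hKneg hKpos h2).2.2.2.2.1 h)]
    · rw [if_neg h, if_neg (fun hc => h ((tag_match hKneg hKpos h2).2.2.2.2.2 hc))]
      rw [pTag_sync hKneg hKpos h2]
      by_cases hu : 0 < tagVal fm fp T.1
      · rw [if_pos hu, if_pos ((tag_match hKneg hKpos h1).1.1 hu),
          pTag_sync hKneg hKpos h1]
      · rw [if_neg hu, if_neg (fun hc => hu ((tag_match hKneg hKpos h1).1.2 hc)),
          pTag_sync hKneg hKpos (t := Tag.pos 0) (Nat.zero_le n)]

include hKneg hKpos in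
lemma real_sync (hF : IsLorenzPair fm fp) (hG : IsLorenzPair gm gp) (w : List Bool) :
    ∀ T : Tag × Tag, tagIdx T.1 + w.length ≤ n → tagIdx T.2 + w.length ≤ n →
    (RealW (lorenzGlue fm fp) (tagVal fm fp T.1) (tagVal fm fp T.2) w ↔
     RealW (lorenzGlue gm gp) (tagVal gm gp T.1) (tagVal gm gp T.2) w) := by
  induction w with
  | nil =>
    intro T h1 h2
    rw [List.length_nil, Nat.add_zero] at h1 h2
    rw [real_nil, real_nil]
    have m1 := tag_match hKneg hKpos (fm := fm) (fp := fp) (gm := gm) (gp := gp) h1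
    have m2 := tag_match hKneg hKpos (fm := fm) (fp := fp) (gm := gm) (gp := gp) h2
    rw [m1.2.2.1, m2.1]
  | cons ε w ih =>
    intro T h1 h2
    rw [List.length_cons] at h1 h2
    rw [real_stepT hF ε T w, real_stepT hG ε T w]
    have hsync : stepT fm fp ε T = stepT gm gp ε T :=
      stepT_sync hKneg hKpos ε (by omega) (by omega)
    rw [← hsync]
    obtain ⟨hi1, hi2⟩ := stepT_idx (fm := fm) (fp := fp) ε T
    have hmax : max (tagIdx T.1) (tagIdx T.2) + 1 + w.length ≤ n := by
      rcases Nat.le_total (tagIdx T.1) (tagIdx T.2) with h | h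
      · rw [Nat.max_eq_right h]; omega
      · rw [Nat.max_eq_left h]; omega
    exact ih (stepT fm fp ε T) (by omega) (by omega)

include hKneg hKpos in
lemma real_transfer (hF : IsLorenzPair fm fp) (hG : IsLorenzPair gm gp) (w : List Bool)
    (hw : w.length ≤ n) :
    RealW (lorenzGlue fm fp) (-1) 1 w ↔ RealW (lorenzGlue gm gp) (-1) 1 w := by
  have := real_sync hKneg hKpos hF hG w (Tag.negone, Tag.one)
    (by simpa [tagIdx] using hw) (by simpa [tagIdx] using hw)
  exact this

end TwoMaps

/-! ### extraction of itineraries -/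

lemma it_last (F : ℝ → ℝ) : ∀ (w : List Bool) (x : ℝ), It F w x → F^[w.length] x = 0 := by
  intro w
  induction w with
  | nil => intro x h; exact h
  | cons ε w ih =>
    intro x h
    rw [List.length_cons, Function.iterate_succ_apply]
    exact ih (F x) h.2

lemma it_signs (F : ℝ → ℝ) : ∀ (w : List Bool) (x : ℝ) (j : ℕ), j < w.length → It F w x →
    (w.getD j false = true → 0 < F^[j] x) ∧ (w.getD j false = false → F^[j] x < 0) := by
  intro w
  induction w with
  | nil => intro x j hj; exact absurd hj (by simp)
  | cons ε w ih =>
    intro x j hj h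
    cases j with
    | zero =>
      cases ε with
      | true =>
        refine ⟨fun _ => ?_, fun hc => by simp at hc⟩
        have := h.1
        rwa [if_pos rfl] at this
      | false =>
        refine ⟨fun hc => by simp at hc, fun _ => ?_⟩
        have := h.1
        rwa [if_neg Bool.false_ne_true] at this
    | succ j =>
      rw [List.length_cons] at hj
      have := ih (F x) j (by omega) h.2
      rw [List.getD_cons_succ]
      rw [Function.iterate_succ_apply]
      exact this

lemma it_of_word (F : ℝ → ℝ) : ∀ (m : ℕ) (x : ℝ), (∀ j < m, F^[j] x ≠ 0) → F^[m] x = 0 →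
    It F ((List.range m).map fun j => decide (0 < F^[j] x)) x := by
  intro m
  induction m with
  | zero => intro x _ h0; exact h0
  | succ m ih =>
    intro x hne h0
    rw [List.range_succ_eq_map, List.map_cons, List.map_map]
    constructor
    · have hx0 : x ≠ 0 := by
        have := hne 0 (Nat.succ_pos m)
        simpa using this
      rcases lt_or_gt_of_ne hx0 with h | h
      · rw [if_neg]
        · exact h
        · simp [not_lt.2 h.le]
      · rw [if_pos]
        · exact h
        · simp [h]
    · have heq : ((fun j => decide (0 < F^[j] x)) ∘ Nat.succ) =
          fun j => decide (0 < F^[j] (F x)) := by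
        funext j
        rfl
      rw [heq]
      apply ih (F x)
      · intro j hj
        rw [← Function.iterate_succ_apply]
        exact hne (j + 1) (by omega)
      · rw [← Function.iterate_succ_apply]
        exact h0

end LorenzRigidity
namespace LorenzRigidity

open Set Filter Function Topology

/-- cut points of depth `< n` together with the endpoints -/
def cutset (fm fp : ℝ → ℝ) (n : ℕ) : Set ℝ :=
  {x | x ∈ Icc (-1:ℝ) 1 ∧ (x = -1 ∨ x = 1 ∨ ∃ i < n, (lorenzGlue fm fp)^[i] x = 0)}

section AddrOne

variable {fm fp : ℝ → ℝ} {n : ℕ}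

lemma cutset_finite (hF : IsLorenzPair fm fp) : Set.Finite (cutset fm fp n) := by
  apply Set.Finite.subset ((cut_finite hF n).union (Set.finite_singleton (-1) |>.union
    (Set.finite_singleton 1)))
  rintro x ⟨hx, h | h | h⟩
  · exact Or.inr (Or.inl h)
  · exact Or.inr (Or.inr h)
  · exact Or.inl ⟨hx, h⟩

lemma neg_one_mem_cutset : (-1:ℝ) ∈ cutset fm fp n :=
  ⟨⟨le_rfl, by norm_num⟩, Or.inl rfl⟩

lemma one_mem_cutset : (1:ℝ) ∈ cutset fm fp n :=
  ⟨⟨by norm_num, le_rfl⟩, Or.inr (Or.inl rfl)⟩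

lemma iter_eq_after (F : ℝ → ℝ) {x y : ℝ} {p j : ℕ} (hp : F^[p] x = F^[p] y) (hpj : p ≤ j) :
    F^[j] x = F^[j] y := by
  obtain ⟨q, rfl⟩ := Nat.exists_eq_add_of_le hpj
  rw [Nat.add_comm p q, Function.iterate_add_apply, Function.iterate_add_apply, hp]

/-- lexicographic comparability of itineraries -/
def seqLe (n : ℕ) (A B : ℕ → ℤ) : Prop :=
  ∀ j < n, (∀ i < j, A i = B i) → A j ≤ B j

lemma seqLe_antisymm {n : ℕ} {A B : ℕ → ℤ} (h1 : seqLe n A B) (h2 : seqLe n B A) :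
    ∀ i < n, A i = B i := by
  intro i
  induction i using Nat.strong_induction_on with
  | _ i ih =>
    intro hi
    have hpre : ∀ p < i, A p = B p := fun p hp => ih p hp (hp.trans hi)
    exact le_antisymm (h1 i hi hpre) (h2 i hi fun p hp => (hpre p hp).symm)

lemma tern_ne_zero {t : ℝ} (h : t ≠ 0) : tern t ≠ 0 :=
  fun hc => h (tern_eq_zero_iff.1 hc)

/-- weak lexicographic monotonicity of the itinerary map -/
lemma addr_le (hF : IsLorenzPair fm fp) {x y : ℝ} (hx : x ∈ Icc (-1:ℝ) 1)
    (hy : y ∈ Icc (-1:ℝ) 1) (hxy : x ≤ y) :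
    seqLe n (fun i => tern ((lorenzGlue fm fp)^[i] x)) (fun i => tern ((lorenzGlue fm fp)^[i] y)) := by
  intro j hj hpre
  by_cases hz : ∃ p < j, (lorenzGlue fm fp)^[p] x = 0
  · obtain ⟨p, hp, h0⟩ := hz
    have h0y : (lorenzGlue fm fp)^[p] y = 0 := by
      have h' : tern ((lorenzGlue fm fp)^[p] x) = tern ((lorenzGlue fm fp)^[p] y) := hpre p hp
      rw [tern_of_zero h0] at h'
      exact tern_eq_zero_iff.1 h'.symm
    have heq := iter_eq_after (lorenzGlue fm fp) (x := x) (y := y) (h0.trans h0y.symm) hp.le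
    show tern ((lorenzGlue fm fp)^[j] x) ≤ tern ((lorenzGlue fm fp)^[j] y)
    rw [heq]
  · push_neg at hz
    rcases eq_or_lt_of_le hxy with rfl | hlt
    · exact le_rfl
    · apply tern_mono
      apply le_of_lt
      apply iter_lt_iter hF hx hy hlt
      intro i hi
      have hne := hz i hi
      have heq : tern ((lorenzGlue fm fp)^[i] x) = tern ((lorenzGlue fm fp)^[i] y) := hpre i hi
      rcases lt_trichotomy ((lorenzGlue fm fp)^[i] x) 0 with h | h | h
      · left
        rw [tern_of_neg h] at heq
        exact tern_neg_iff.1 heq.symm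
      · exact absurd h hne
      · right; exact h.le

lemma cut_mem_Ioo (hF : IsLorenzPair fm fp) {x : ℝ} (hx : x ∈ Icc (-1:ℝ) 1) {i : ℕ}
    (h0 : (lorenzGlue fm fp)^[i] x = 0) : x ∈ Ioo (-1:ℝ) 1 := by
  constructor
  · rcases eq_or_lt_of_le hx.1 with h | h
    · exfalso
      rw [← h, iter_neg_one hF] at h0
      norm_num at h0
    · exact h
  · rcases eq_or_lt_of_le hx.2 with h | h
    · exfalso
      rw [h, iter_one hF] at h0
      norm_num at h0
    · exact h

/-- injectivity of the address on the cut set (needs `1 ≤ n`) -/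
lemma addr_inj_lt (hF : IsLorenzPair fm fp) (hn : 1 ≤ n) {x y : ℝ}
    (hx : x ∈ cutset fm fp n) (hy : y ∈ cutset fm fp n) (hxy : x < y)
    (haddr : ∀ i < n, tern ((lorenzGlue fm fp)^[i] x) = tern ((lorenzGlue fm fp)^[i] y)) :
    False := by
  rcases hx.2 with rfl | rfl | hcx
  · -- x = -1 : all its addresses are -1
    have hxaddr : ∀ i, tern ((lorenzGlue fm fp)^[i] (-1:ℝ)) = -1 := by
      intro i; rw [iter_neg_one hF]; exact tern_of_neg (by norm_num)
    rcases hy.2 with rfl | rfl | hcy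
    · exact lt_irrefl _ hxy
    · have := haddr 0 hn
      rw [hxaddr 0] at this
      have h1 : tern ((lorenzGlue fm fp)^[0] (1:ℝ)) = 1 := tern_of_pos (by norm_num)
      rw [h1] at this; omega
    · obtain ⟨i, hi, h0⟩ := hcy
      have := haddr i hi
      rw [hxaddr i, tern_of_zero h0] at this; omega
  · exact absurd hxy (not_lt.2 hy.1.2)
  · -- x is a genuine cut
    have hex : ∃ i, (lorenzGlue fm fp)^[i] x = 0 := by
      obtain ⟨i, _, h0⟩ := hcx
      exact ⟨i, h0⟩
    classical
    set m := Nat.find hex with hm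
    have hm0 : (lorenzGlue fm fp)^[m] x = 0 := Nat.find_spec hex
    have hmlt : m < n := by
      obtain ⟨i, hi, h0⟩ := hcx
      exact lt_of_le_of_lt (Nat.find_min' hex h0) hi
    have hy0 : (lorenzGlue fm fp)^[m] y = 0 := by
      have := haddr m hmlt
      rw [tern_of_zero hm0] at this
      exact tern_eq_zero_iff.1 this.symm
    have : (lorenzGlue fm fp)^[m] x < (lorenzGlue fm fp)^[m] y := by
      apply iter_lt_iter hF hx.1 hy.1 hxy
      intro i hi
      have hne : (lorenzGlue fm fp)^[i] x ≠ 0 := Nat.find_min hex hi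
      have heq := haddr i (hi.trans hmlt)
      rcases lt_trichotomy ((lorenzGlue fm fp)^[i] x) 0 with h | h | h
      · left
        rw [tern_of_neg h] at heq
        exact tern_neg_iff.1 heq.symm
      · exact absurd h hne
      · right; exact h.le
    rw [hm0, hy0] at this
    exact lt_irrefl _ this

lemma addr_inj (hF : IsLorenzPair fm fp) (hn : 1 ≤ n) {x y : ℝ}
    (hx : x ∈ cutset fm fp n) (hy : y ∈ cutset fm fp n)
    (haddr : ∀ i < n, tern ((lorenzGlue fm fp)^[i] x) = tern ((lorenzGlue fm fp)^[i] y)) :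
    x = y := by
  rcases lt_trichotomy x y with h | h | h
  · exact absurd (addr_inj_lt hF hn hx hy h haddr) not_false
  · exact h
  · exact absurd (addr_inj_lt hF hn hy hx h (fun i hi => (haddr i hi).symm)) not_false

end AddrOne

lemma tern_match {x y : ℝ} (h1 : 0 < x ↔ 0 < y) (h2 : x = 0 ↔ y = 0) : tern x = tern y := by
  rcases lt_trichotomy x 0 with h | h | h
  · rw [tern_of_neg h, tern_of_neg ((sign_match h1 h2).1.1 h)]
  · rw [tern_of_zero h, tern_of_zero (h2.1 h)]
  · rw [tern_of_pos h, tern_of_pos (h1.1 h)]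

section AddrTwo

variable {fm fp gm gp : ℝ → ℝ} {n : ℕ}

variable (hKneg : ∀ i ≤ n, (0 < critNeg fm fp i ↔ 0 < critNeg gm gp i) ∧
      (critNeg fm fp i = 0 ↔ critNeg gm gp i = 0))
variable (hKpos : ∀ i ≤ n, (0 < critPos fm fp i ↔ 0 < critPos gm gp i) ∧
      (critPos fm fp i = 0 ↔ critPos gm gp i = 0))

include hKneg hKpos in
/-- fundamental transfer: every point of the cut set of `f` has a partner with the same
address in the cut set of `g`. -/
lemma cut_transfer (hF : IsLorenzPair fm fp) (hG : IsLorenzPair gm gp) {x : ℝ}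
    (hx : x ∈ cutset fm fp n) :
    ∃ y ∈ cutset gm gp n, ∀ i < n,
      tern ((lorenzGlue fm fp)^[i] x) = tern ((lorenzGlue gm gp)^[i] y) := by
  rcases hx.2 with rfl | rfl | hcx
  · refine ⟨-1, neg_one_mem_cutset, fun i _ => ?_⟩
    rw [iter_neg_one hF, iter_neg_one hG]
  · refine ⟨1, one_mem_cutset, fun i _ => ?_⟩
    rw [iter_one hF, iter_one hG]
  · have hex : ∃ i, (lorenzGlue fm fp)^[i] x = 0 := by
      obtain ⟨i, _, h0⟩ := hcx
      exact ⟨i, h0⟩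
    classical
    set m := Nat.find hex with hm
    have hm0 : (lorenzGlue fm fp)^[m] x = 0 := Nat.find_spec hex
    have hmin : ∀ j < m, (lorenzGlue fm fp)^[j] x ≠ 0 := fun j hj => Nat.find_min hex hj
    have hmlt : m < n := by
      obtain ⟨i, hi, h0⟩ := hcx
      exact lt_of_le_of_lt (Nat.find_min' hex h0) hi
    set w : List Bool := (List.range m).map (fun j => decide (0 < (lorenzGlue fm fp)^[j] x))
      with hw
    have hwlen : w.length = m := by simp [hw]
    have hitf : It (lorenzGlue fm fp) w x := it_of_word _ m x hmin hm0
    have hRf : RealW (lorenzGlue fm fp) (-1) 1 w :=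
      ⟨x, cut_mem_Ioo hF hx.1 hm0, hitf⟩
    have hRg : RealW (lorenzGlue gm gp) (-1) 1 w :=
      (real_transfer hKneg hKpos hF hG w (by omega)).1 hRf
    obtain ⟨y, hyIoo, hitg⟩ := hRg
    have hylast : (lorenzGlue gm gp)^[m] y = 0 := by
      have := it_last _ w y hitg
      rwa [hwlen] at this
    refine ⟨y, ⟨⟨hyIoo.1.le, hyIoo.2.le⟩, Or.inr (Or.inr ⟨m, hmlt, hylast⟩)⟩, ?_⟩
    intro i hi
    rcases lt_or_ge i m with him | him
    · -- use the signs encoded in the word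
      have hgetd : w.getD i false = decide (0 < (lorenzGlue fm fp)^[i] x) := by
        rw [hw, List.getD_eq_getElem _ _ (by simp [hw]; omega)]
        simp
      have hsf := it_signs (lorenzGlue fm fp) w x i (by omega) hitf
      have hsg := it_signs (lorenzGlue gm gp) w y i (by omega) hitg
      rcases lt_trichotomy ((lorenzGlue fm fp)^[i] x) 0 with h | h | h
      · have hfalse : w.getD i false = false := by
          rw [hgetd, decide_eq_false (not_lt.2 h.le)]
        rw [tern_of_neg h, tern_of_neg (hsg.2 hfalse)]
      · exact absurd h (hmin i him)
      · have htrue : w.getD i false = true := by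
          rw [hgetd, decide_eq_true h]
        rw [tern_of_pos h, tern_of_pos (hsg.1 htrue)]
    · -- after the cut the itinerary is that of the critical orbit
      have hfx : (lorenzGlue fm fp)^[i] x = critPos fm fp (i - m) := by
        rw [critPos_eq_iter, ← hm0, ← Function.iterate_add_apply, Nat.sub_add_cancel him]
      have hgy : (lorenzGlue gm gp)^[i] y = critPos gm gp (i - m) := by
        rw [critPos_eq_iter, ← hylast, ← Function.iterate_add_apply, Nat.sub_add_cancel him]
      rw [hfx, hgy]
      obtain ⟨h1, h2⟩ := hKpos (i - m) (by omega)
      exact tern_match h1 h2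

end AddrTwo

end LorenzRigidity
namespace LorenzRigidity

open Set Filter Function Topology

/-! ### piecewise linear interpolation through a finite increasing family of points -/

def PwRel : ℝ × ℝ → ℝ × ℝ → Prop := fun p q => p.1 < q.1 ∧ p.2 < q.2

noncomputable def interp : List (ℝ × ℝ) → ℝ → ℝ
  | [], x => x
  | [(a, c)], x => x - a + c
  | (a, c) :: (b, d) :: rest, x =>
      if b ≤ x then interp ((b, d) :: rest) x
      else c + (d - c) / (b - a) * (x - a)

lemma interp_eval : ∀ (L : List (ℝ × ℝ)), L.Pairwise PwRel → ∀ p ∈ L, interp L p.1 = p.2 := by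
  intro L
  induction L with
  | nil => intro _ p hp; exact absurd hp List.not_mem_nil
  | cons q rest ih =>
    intro hL p hp
    obtain ⟨a, c⟩ := q
    obtain ⟨px, py⟩ := p
    cases rest with
    | nil =>
      have heq := List.mem_singleton.1 hp
      injection heq with h1 h2
      subst h1; subst h2
      show px - px + py = py
      ring
    | cons q2 rest2 =>
      obtain ⟨b, d⟩ := q2
      have hab : a < b := (List.pairwise_cons.1 hL).1 (b, d) List.mem_cons_self |>.1
      rcases List.mem_cons.1 hp with heq | hp2
      · injection heq with h1 h2
        subst h1; subst h2
        show (if b ≤ px then interp ((b, d) :: rest2) px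
          else py + (d - py) / (b - px) * (px - px)) = py
        rw [if_neg (not_le.2 hab), sub_self, mul_zero, add_zero]
      · have hbp : b ≤ px := by
          rcases List.mem_cons.1 hp2 with heq2 | hp3
          · injection heq2 with h1 h2
            rw [h1]
          · exact le_of_lt
              (((List.pairwise_cons.1 (List.pairwise_cons.1 hL).2).1 (px, py) hp3).1)
        show (if b ≤ px then interp ((b, d) :: rest2) px
          else c + (d - c) / (b - a) * (px - a)) = py
        rw [if_pos hbp]
        exact ih (List.pairwise_cons.1 hL).2 (px, py) hp2

lemma interp_continuous : ∀ (L : List (ℝ × ℝ)), L.Pairwise PwRel → Continuous (interp L) := by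
  intro L
  induction L with
  | nil => intro _; exact continuous_id
  | cons q rest ih =>
    intro hL
    obtain ⟨a, c⟩ := q
    cases rest with
    | nil =>
      show Continuous fun x => x - a + c
      fun_prop
    | cons q2 rest2 =>
      obtain ⟨b, d⟩ := q2
      have hab : a < b := (List.pairwise_cons.1 hL).1 (b, d) List.mem_cons_self |>.1
      have htail := ih (List.pairwise_cons.1 hL).2
      show Continuous fun x =>
        if b ≤ x then interp ((b, d) :: rest2) x else c + (d - c) / (b - a) * (x - a)
      apply Continuous.if_le htail (by fun_prop) continuous_const continuous_id
      intro x hx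
      subst hx
      rw [interp_eval _ (List.pairwise_cons.1 hL).2 (b, d) List.mem_cons_self]
      have hba : b - a ≠ 0 := by linarith
      rw [div_mul_cancel₀ _ hba]
      ring

lemma interp_strictMono : ∀ (L : List (ℝ × ℝ)), L.Pairwise PwRel →
    StrictMono (interp L) := by
  intro L
  induction L with
  | nil => intro _; exact strictMono_id
  | cons q rest ih =>
    intro hL
    obtain ⟨a, c⟩ := q
    cases rest with
    | nil =>
      intro x y hxy
      show x - a + c < y - a + c
      linarith
    | cons q2 rest2 =>
      obtain ⟨b, d⟩ := q2
      have hab : a < b := (List.pairwise_cons.1 hL).1 (b, d) List.mem_cons_self |>.1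
      have hcd : c < d := (List.pairwise_cons.1 hL).1 (b, d) List.mem_cons_self |>.2
      have htail := ih (List.pairwise_cons.1 hL).2
      have hslope : 0 < (d - c) / (b - a) := div_pos (by linarith) (by linarith)
      have hsegmono : StrictMono fun x => c + (d - c) / (b - a) * (x - a) := by
        intro x y hxy
        have := mul_lt_mul_of_pos_left (sub_lt_sub_right hxy a) hslope
        dsimp only
        linarith
      have hsegb : (fun x => c + (d - c) / (b - a) * (x - a)) b = d := by
        have hba : b - a ≠ 0 := by linarith
        show c + (d - c) / (b - a) * (b - a) = d
        rw [div_mul_cancel₀ _ hba]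
        ring
      have hweld : interp ((b, d) :: rest2) b = d :=
        interp_eval _ (List.pairwise_cons.1 hL).2 (b, d) List.mem_cons_self
      intro x y hxy
      show (if b ≤ x then _ else _) < (if b ≤ y then _ else _)
      split_ifs with h1 h2 h2
      · exact htail hxy
      · exact absurd (h1.trans hxy.le) h2
      · calc c + (d - c) / (b - a) * (x - a) < d := by
              have := hsegmono (show x < b from not_le.1 h1)
              rw [hsegb] at this
              exact this
          _ ≤ interp ((b, d) :: rest2) y := by
              rcases eq_or_lt_of_le h2 with rfl | h3
              · exact le_of_eq hweld.symm
              · exact hweld.symm.le.trans (htail h3).le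
      · exact hsegmono hxy

end LorenzRigidity
namespace LorenzRigidity

open Set Filter Function Topology

/-- the trivial branch of `f^0` -/
lemma isBranch_zero {F : ℝ → ℝ} {a b : ℝ} (hB : IsBranch F 0 a b) : a = -1 ∧ b = 1 := by
  obtain ⟨ha, hab, hb, _, hmax⟩ := hB
  have h01 : noCut F 0 (Ioo (-1:ℝ) 1) := fun x _ i hi => absurd hi (Nat.not_lt_zero i)
  obtain ⟨h1, h2⟩ := hmax (-1) 1 le_rfl le_rfl ha hb h01
  exact ⟨h1.symm, h2.symm⟩

lemma isBranch_zero' {F : ℝ → ℝ} : IsBranch F 0 (-1) 1 := by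
  refine ⟨le_rfl, by norm_num, le_rfl, fun x _ i hi => absurd hi (Nat.not_lt_zero i), ?_⟩
  intro a' b' h1 h2 h3 h4 _
  exact ⟨le_antisymm h3 h1, le_antisymm h2 h4⟩

end LorenzRigidity

open Set Filter Function Topology LorenzRigidity in
theorem kneading_implies_branch_homeo'
    (fm fp gm gp : ℝ → ℝ) (hF : IsLorenzPair fm fp) (hG : IsLorenzPair gm gp) (n : ℕ)
    (hKneg : ∀ i ≤ n, (0 < critNeg fm fp i ↔ 0 < critNeg gm gp i) ∧
      (critNeg fm fp i = 0 ↔ critNeg gm gp i = 0))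
    (hKpos : ∀ i ≤ n, (0 < critPos fm fp i ↔ 0 < critPos gm gp i) ∧
      (critPos fm fp i = 0 ↔ critPos gm gp i = 0)) :
    ∃ h : ℝ → ℝ, ContinuousOn h (Icc (-1) 1) ∧ StrictMonoOn h (Icc (-1) 1) ∧
      h '' Icc (-1) 1 = Icc (-1) 1 ∧ h (-1) = -1 ∧ h 1 = 1 ∧
      ∀ k ≤ n, ∀ a b : ℝ, IsBranch (lorenzGlue fm fp) k a b →
        IsBranch (lorenzGlue gm gp) k (h a) (h b) ∧
        ∀ w : ℕ → Bool, HasWord (lorenzGlue fm fp) k a b w →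
          HasWord (lorenzGlue gm gp) k (h a) (h b) w := by
  classical
  set F := lorenzGlue fm fp with hFdef
  set G := lorenzGlue gm gp with hGdef
  rcases Nat.eq_zero_or_pos n with rfl | hn
  · -- trivial case n = 0
    refine ⟨id, continuousOn_id, fun x _ y _ hxy => hxy, Set.image_id _, rfl, rfl, ?_⟩
    intro k hk a b hB
    have hk0 : k = 0 := Nat.le_zero.1 hk
    subst hk0
    obtain ⟨ha, hb⟩ := isBranch_zero hB
    subst ha; subst hb
    refine ⟨isBranch_zero', ?_⟩
    intro w _ i hi
    exact absurd hi (Nat.not_lt_zero i)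
  · -- main case
    have hKneg' : ∀ i ≤ n, (0 < critNeg gm gp i ↔ 0 < critNeg fm fp i) ∧
        (critNeg gm gp i = 0 ↔ critNeg fm fp i = 0) :=
      fun i hi => ⟨(hKneg i hi).1.symm, (hKneg i hi).2.symm⟩
    have hKpos' : ∀ i ≤ n, (0 < critPos gm gp i ↔ 0 < critPos fm fp i) ∧
        (critPos gm gp i = 0 ↔ critPos fm fp i = 0) :=
      fun i hi => ⟨(hKpos i hi).1.symm, (hKpos i hi).2.symm⟩
    set CF := cutset fm fp n with hCF
    set CG := cutset gm gp n with hCG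
    set φ : ℝ → ℝ := fun x =>
      if hx : ∃ y, y ∈ CG ∧ ∀ i < n, tern (F^[i] x) = tern (G^[i] y) then hx.choose else 0
      with hφdef
    have hφ : ∀ x ∈ CF, φ x ∈ CG ∧ ∀ i < n, tern (F^[i] x) = tern (G^[i] (φ x)) := by
      intro x hx
      obtain ⟨y, hy, hcorr⟩ := cut_transfer hKneg hKpos hF hG hx
      have hex : ∃ y, y ∈ CG ∧ ∀ i < n, tern (F^[i] x) = tern (G^[i] y) := ⟨y, hy, hcorr⟩
      rw [hφdef]
      simp only [dif_pos hex]
      exact hex.choose_spec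
    have hφuniq : ∀ x ∈ CF, ∀ y ∈ CG, (∀ i < n, tern (F^[i] x) = tern (G^[i] y)) →
        φ x = y := by
      intro x hx y hy hcorr
      apply addr_inj hG hn (hφ x hx).1 hy
      intro i hi
      exact ((hφ x hx).2 i hi).symm.trans (hcorr i hi)
    have hφmono : ∀ x ∈ CF, ∀ y ∈ CF, x < y → φ x < φ y := by
      intro x hx y hy hxy
      rcases lt_trichotomy (φ x) (φ y) with h | h | h
      · exact h
      · exfalso
        have : x = y := by
          apply addr_inj hF hn hx hy
          intro i hi
          rw [(hφ x hx).2 i hi, (hφ y hy).2 i hi, h]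
        exact absurd this (ne_of_lt hxy)
      · exfalso
        have hle1 : seqLe n (fun i => tern (F^[i] x)) (fun i => tern (F^[i] y)) :=
          addr_le hF hx.1 hy.1 hxy.le
        have hle2 : seqLe n (fun i => tern (F^[i] y)) (fun i => tern (F^[i] x)) := by
          intro j hj hpre
          have hpre' : ∀ i < j, tern (G^[i] (φ y)) = tern (G^[i] (φ x)) := by
            intro i hi
            rw [← (hφ x hx).2 i (hi.trans hj), ← (hφ y hy).2 i (hi.trans hj)]
            exact hpre i hi
          have := addr_le hG (hφ y hy).1.1 (hφ x hx).1.1 h.le j hj hpre'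
          show tern (F^[j] y) ≤ tern (F^[j] x)
          rw [(hφ x hx).2 j hj, (hφ y hy).2 j hj]
          exact this
        have heq := seqLe_antisymm hle1 hle2
        have : x = y := addr_inj hF hn hx hy heq
        exact absurd this (ne_of_lt hxy)
    have hφm1 : φ (-1) = -1 := by
      apply hφuniq (-1) neg_one_mem_cutset (-1) neg_one_mem_cutset
      intro i _
      rw [hFdef, hGdef, iter_neg_one hF, iter_neg_one hG]
    have hφ1 : φ 1 = 1 := by
      apply hφuniq 1 one_mem_cutset 1 one_mem_cutset
      intro i _
      rw [hFdef, hGdef, iter_one hF, iter_one hG]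
    have hφsurj : ∀ y ∈ CG, ∃ x ∈ CF, φ x = y := by
      intro y hy
      obtain ⟨x, hx, hcorr⟩ := cut_transfer hKneg' hKpos' hG hF hy
      exact ⟨x, hx, hφuniq x hx y hy (fun i hi => (hcorr i hi).symm)⟩
    -- build the interpolation
    have hCFfin : Set.Finite CF := cutset_finite hF
    set SF : Finset ℝ := hCFfin.toFinset with hSF
    set LF : List ℝ := SF.sort (· ≤ ·) with hLF
    have hmemLF : ∀ x, x ∈ LF ↔ x ∈ CF := by
      intro x
      rw [hLF, Finset.mem_sort, hSF, Set.Finite.mem_toFinset]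
    have hsorted : LF.Pairwise (· < ·) := (Finset.sortedLT_sort SF).pairwise
    set pairs : List (ℝ × ℝ) := LF.map fun a => (a, φ a) with hpairs
    have hpw : pairs.Pairwise PwRel := by
      rw [hpairs, List.pairwise_map]
      apply hsorted.imp_of_mem
      intro u v hu hv huv
      exact ⟨huv, hφmono u ((hmemLF u).1 hu) v ((hmemLF v).1 hv) huv⟩
    set h : ℝ → ℝ := interp pairs with hdef
    have hmono : StrictMono h := interp_strictMono pairs hpw
    have hcont : Continuous h := interp_continuous pairs hpw
    have heval : ∀ x ∈ CF, h x = φ x := by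
      intro x hx
      exact interp_eval pairs hpw (x, φ x)
        (List.mem_map_of_mem (f := fun a => (a, φ a)) ((hmemLF x).2 hx))
    have hm1 : h (-1) = -1 := (heval _ neg_one_mem_cutset).trans hφm1
    have h1 : h 1 = 1 := (heval _ one_mem_cutset).trans hφ1
    have hcorr : ∀ x ∈ CF, ∀ i < n, tern (F^[i] x) = tern (G^[i] (h x)) := by
      intro x hx i hi
      rw [heval x hx]
      exact (hφ x hx).2 i hi
    have himg : h '' Icc (-1:ℝ) 1 = Icc (-1:ℝ) 1 := by
      apply Set.Subset.antisymm
      · rintro y ⟨x, hx, rfl⟩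
        constructor
        · rw [← hm1]; exact hmono.monotone hx.1
        · rw [← h1]; exact hmono.monotone hx.2
      · have := intermediate_value_Icc (a := (-1:ℝ)) (b := 1) (by norm_num)
          hcont.continuousOn
        rwa [hm1, h1] at this
    refine ⟨h, hcont.continuousOn, hmono.strictMonoOn _, himg, hm1, h1, ?_⟩
    intro k hk a b hB
    obtain ⟨ha, hab, hb, hnc, hacut, hbcut⟩ := (isBranch_iff hF).1 hB
    have haIcc : a ∈ Icc (-1:ℝ) 1 := ⟨ha, hab.le.trans hb⟩
    have hbIcc : b ∈ Icc (-1:ℝ) 1 := ⟨ha.trans hab.le, hb⟩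
    have haCF : a ∈ CF := by
      refine ⟨haIcc, ?_⟩
      rcases hacut with hone | ⟨i, hik, h0⟩
      · exact Or.inl hone
      · exact Or.inr (Or.inr ⟨i, lt_of_lt_of_le hik hk, h0⟩)
    have hbCF : b ∈ CF := by
      refine ⟨hbIcc, ?_⟩
      rcases hbcut with hone | ⟨i, hik, h0⟩
      · exact Or.inr (Or.inl hone)
      · exact Or.inr (Or.inr ⟨i, lt_of_lt_of_le hik hk, h0⟩)
    have hham1 : -1 ≤ h a := by rw [← hm1]; exact hmono.monotone ha
    have hhb1 : h b ≤ 1 := by rw [← h1]; exact hmono.monotone hb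
    have hhab : h a < h b := hmono hab
    -- no cuts of g inside the image interval
    have hncg : noCut G k (Ioo (h a) (h b)) := by
      intro y hy i hik h0
      have hyIcc : y ∈ Icc (-1:ℝ) 1 := ⟨hham1.trans hy.1.le, hy.2.le.trans hhb1⟩
      have hyCG : y ∈ CG := ⟨hyIcc, Or.inr (Or.inr ⟨i, lt_of_lt_of_le hik hk, h0⟩)⟩
      obtain ⟨x, hxCF, hφx⟩ := hφsurj y hyCG
      have hhx : h x = y := (heval x hxCF).trans hφx
      have hx0 : F^[i] x = 0 := by
        have := hcorr x hxCF i (lt_of_lt_of_le hik hk)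
        rw [hhx, h0, tern_of_zero rfl] at this
        exact tern_eq_zero_iff.1 this
      have hxmem : x ∈ Ioo a b := by
        constructor
        · exact hmono.lt_iff_lt.1 (by rw [hhx]; exact hy.1)
        · exact hmono.lt_iff_lt.1 (by rw [hhx]; exact hy.2)
      exact hnc x hxmem i hik hx0
    have hacutg : h a = -1 ∨ ∃ i < k, G^[i] (h a) = 0 := by
      rcases hacut with hone | ⟨i, hik, h0⟩
      · left; rw [hone]; exact hm1
      · right
        refine ⟨i, hik, ?_⟩
        have := hcorr a haCF i (lt_of_lt_of_le hik hk)
        rw [h0, tern_of_zero rfl] at this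
        exact tern_eq_zero_iff.1 this.symm
    have hbcutg : h b = 1 ∨ ∃ i < k, G^[i] (h b) = 0 := by
      rcases hbcut with hone | ⟨i, hik, h0⟩
      · left; rw [hone]; exact h1
      · right
        refine ⟨i, hik, ?_⟩
        have := hcorr b hbCF i (lt_of_lt_of_le hik hk)
        rw [h0, tern_of_zero rfl] at this
        exact tern_eq_zero_iff.1 this.symm
    have hBg : IsBranch G k (h a) (h b) :=
      (isBranch_iff hG).2 ⟨hham1, hhab, hhb1, hncg, hacutg, hbcutg⟩
    refine ⟨hBg, ?_⟩
    intro w hw i hik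
    have hx0mem : (a + b) / 2 ∈ Ioo a b := ⟨by linarith, by linarith⟩
    have hwobf := word_of_branch hF ha hb hab hnc hik ((a + b) / 2) hx0mem
    have hwobg := word_of_branch hG hham1 hhb1 hhab hncg hik
    have hside : 0 ≤ G^[i] (h a) ↔ 0 ≤ F^[i] a := by
      have := hcorr a haCF i (lt_of_lt_of_le hik hk)
      rw [tern_nonneg_iff, tern_nonneg_iff, this]
    constructor
    · intro hwi
      rintro z ⟨y, hy, rfl⟩
      obtain ⟨hyIoo, hyiff⟩ := hwobg y hy
      have hfa : ¬ (0 ≤ F^[i] a) := by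
        intro hcon
        have h2 := (hw i hik).1 hwi (Set.mem_image_of_mem _ hx0mem)
        exact absurd (hwobf.2.1 hcon) (not_lt.2 h2.2.le)
      have hgy : ¬ (0 < G^[i] y) := fun hc => hfa (hside.1 (hyiff.2 hc))
      refine ⟨hyIoo.1.le, ?_⟩
      exact lt_of_le_of_ne (not_lt.1 hgy) (hncg y hy i hik)
    · intro hwi
      rintro z ⟨y, hy, rfl⟩
      obtain ⟨hyIoo, hyiff⟩ := hwobg y hy
      have hfa : 0 ≤ F^[i] a :=
        hwobf.2.2 ((hw i hik).2 hwi (Set.mem_image_of_mem _ hx0mem)).1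
      exact ⟨hyiff.1 (hside.2 hfa), hyIoo.2.le⟩

/-- **Lemma 2.1 (combinatorial rigidity).** If two Lorenz maps have the same kneading data up
to time `n` (the sides of the critical orbits, and their vanishing, agree up to time `n`)
then there is an orientation preserving homeomorphism of `[-1,1]` carrying branches of
`f^k` to branches of `g^k` with the same itinerary words, for all `k ≤ n`. -/
theorem kneading_implies_branch_homeo
    (fm fp gm gp : ℝ → ℝ) (hF : IsLorenzPair fm fp) (hG : IsLorenzPair gm gp) (n : ℕ)
    (hKneg : ∀ i ≤ n, (0 < critNeg fm fp i ↔ 0 < critNeg gm gp i) ∧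
      (critNeg fm fp i = 0 ↔ critNeg gm gp i = 0))
    (hKpos : ∀ i ≤ n, (0 < critPos fm fp i ↔ 0 < critPos gm gp i) ∧
      (critPos fm fp i = 0 ↔ critPos gm gp i = 0)) :
    ∃ h : ℝ → ℝ, ContinuousOn h (Icc (-1) 1) ∧ StrictMonoOn h (Icc (-1) 1) ∧
      h '' Icc (-1) 1 = Icc (-1) 1 ∧ h (-1) = -1 ∧ h 1 = 1 ∧
      ∀ k ≤ n, ∀ a b : ℝ, IsBranch (lorenzGlue fm fp) k a b →
        IsBranch (lorenzGlue gm gp) k (h a) (h b) ∧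
        ∀ w : ℕ → Bool, HasWord (lorenzGlue fm fp) k a b w →
          HasWord (lorenzGlue gm gp) k (h a) (h b) w := by
  exact kneading_implies_branch_homeo' fm fp gm gp hF hG n hKneg hKpos
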